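/- Under threshold selection (mechanism ALL), Property E2 implies the prediction map f*(z) = E_C[p | z] is efficiency-maximizing: for every prediction map f, EV(f) ≤ EV(f*), where EV(f) = Σ_i Pr^Q(q_i)·1[b_i·f(z_i) ≥ 1]·(p_i b_i − 1). Moreover, for each group B of ads sharing a common (b,z), Σ_{i∈B} Pr^Q(q_i)(p_i b_i − 1) = C_B(b·E_C[p|z] − 1) where C_B = Σ_{i∈B} Pr^Q(q_i), so f* shows a group exactly when it contributes non-negative value. -/

import Mathlib

open Finset Classical

/-- `E[p | S]`: the `w`-weighted mean of `p` over a finite set `S` of ads. -/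
noncomputable def condMean {n : ℕ} (w p : Fin n → ℝ) (S : Finset (Fin n)) : ℝ :=
  (∑ i ∈ S, w i * p i) / (∑ i ∈ S, w i)

/-- Expected value per query under mechanism ALL: ad `i` shows iff `b i * f (z i) ≥ 1`
and then contributes `w i * (p i * b i - 1)`, where `w i = Pr^Q(q_i)`. -/
noncomputable def EVall {n : ℕ} (p b w : Fin n → ℝ) (z : Fin n → ℕ) (f : ℕ → ℝ) : ℝ :=
  ∑ i, if b i * f (z i) ≥ 1 then w i * (p i * b i - 1) else 0

/-- Threshold selection (mechanism ALL).  Under Property E2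
(`E_C[p | z,b] = E_C[p | z]` whenever defined), the prediction map
`fstar z' = E_C[p | z']` is efficiency-maximizing: `EV(f) ≤ EV(fstar)` for every map
`f`.  Moreover each group `B` of ads sharing a common `(b,z)` satisfies
`∑_{i∈B} w i (p i b i - 1) = (∑_{i∈B} w i) * (b * E_C[p|z] - 1)`, so `fstar` shows a
group exactly when it contributes non-negative value. -/
theorem propE2_implies_fstar_efficiency_maximizing_ALL (n : ℕ)
    (p b w : Fin n → ℝ) (z : Fin n → ℕ)
    (hp : ∀ i, 0 ≤ p i ∧ p i ≤ 1) (hb : ∀ i, 0 < b i) (hw : ∀ i, 0 < w i)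
    (hE2 : ∀ i : Fin n,
      condMean w p (Finset.univ.filter (fun j => z j = z i ∧ b j = b i))
        = condMean w p (Finset.univ.filter (fun j => z j = z i)))
    (fstar : ℕ → ℝ)
    (hfstar : ∀ i : Fin n,
      fstar (z i) = condMean w p (Finset.univ.filter (fun j => z j = z i))) :
    (∀ i : Fin n,
      ∑ j ∈ Finset.univ.filter (fun j => z j = z i ∧ b j = b i), w j * (p j * b j - 1)
        = (∑ j ∈ Finset.univ.filter (fun j => z j = z i ∧ b j = b i), w j)
          * (b i * condMean w p (Finset.univ.filter (fun j => z j = z i)) - 1)) ∧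
    (∀ f : ℕ → ℝ, EVall p b w z f ≤ EVall p b w z fstar) := by

  classical
  have key : ∀ i : Fin n,
      ∑ j ∈ Finset.univ.filter (fun j => z j = z i ∧ b j = b i), w j * (p j * b j - 1)
        = (∑ j ∈ Finset.univ.filter (fun j => z j = z i ∧ b j = b i), w j)
          * (b i * condMean w p (Finset.univ.filter (fun j => z j = z i)) - 1) := by
    intro i
    set B := Finset.univ.filter (fun j => z j = z i ∧ b j = b i) with hB
    have hiB : i ∈ B := by simp [hB]
    have hWpos : 0 < ∑ j ∈ B, w j := Finset.sum_pos (fun j _ => hw j) ⟨i, hiB⟩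
    have hmean : ∑ j ∈ B, w j * p j
        = condMean w p (Finset.univ.filter (fun j => z j = z i)) * (∑ j ∈ B, w j) := by
      have h := hE2 i
      rw [condMean] at h
      exact (div_eq_iff hWpos.ne').mp h
    have h1 : ∑ j ∈ B, w j * (p j * b j - 1) = b i * (∑ j ∈ B, w j * p j) - ∑ j ∈ B, w j := by
      rw [Finset.mul_sum, ← Finset.sum_sub_distrib]
      refine Finset.sum_congr rfl fun j hj => ?_
      have hbj : b j = b i := (Finset.mem_filter.mp hj).2.2
      rw [hbj]; ring
    rw [h1, hmean]; ring
  refine ⟨key, fun f => ?_⟩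
  have hfib : ∀ (g : ℕ → ℝ), EVall p b w z g
      = ∑ c ∈ Finset.univ.image (fun i => (z i, b i)),
          ∑ j ∈ Finset.univ.filter (fun j => (z j, b j) = c),
            (if b j * g (z j) ≥ 1 then w j * (p j * b j - 1) else 0) := by
    intro g
    exact (Finset.sum_fiberwise_of_maps_to
      (fun x _ => Finset.mem_image_of_mem _ (Finset.mem_univ x)) _).symm
  rw [hfib f, hfib fstar]
  refine Finset.sum_le_sum fun c hc => ?_
  obtain ⟨i, -, hki⟩ := Finset.mem_image.mp hc
  subst hki
  have hBeq : Finset.univ.filter (fun j => (z j, b j) = (z i, b i))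
      = Finset.univ.filter (fun j => z j = z i ∧ b j = b i) := by
    ext j; simp [Prod.ext_iff]
  rw [hBeq]
  set B := Finset.univ.filter (fun j => z j = z i ∧ b j = b i) with hB
  have hiB : i ∈ B := by simp [hB]
  have hWpos : 0 < ∑ j ∈ B, w j := Finset.sum_pos (fun j _ => hw j) ⟨i, hiB⟩
  have hconst : ∀ (g : ℕ → ℝ),
      ∑ j ∈ B, (if b j * g (z j) ≥ 1 then w j * (p j * b j - 1) else 0)
        = if b i * g (z i) ≥ 1 then ∑ j ∈ B, w j * (p j * b j - 1) else 0 := by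
    intro g
    have : ∀ j ∈ B, (if b j * g (z j) ≥ 1 then w j * (p j * b j - 1) else 0)
        = (if b i * g (z i) ≥ 1 then w j * (p j * b j - 1) else 0) := by
      intro j hj
      obtain ⟨hzj, hbj⟩ := (Finset.mem_filter.mp hj).2
      rw [hzj, hbj]
    rw [Finset.sum_congr rfl this]
    split_ifs <;> simp
  rw [hconst f, hconst fstar]
  set m := condMean w p (Finset.univ.filter (fun j => z j = z i)) with hm
  have hS : ∑ j ∈ B, w j * (p j * b j - 1) = (∑ j ∈ B, w j) * (b i * m - 1) := key i
  rw [hfstar i, ← hm]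
  by_cases hQ : b i * m ≥ 1
  · have hS0 : 0 ≤ ∑ j ∈ B, w j * (p j * b j - 1) := by
      rw [hS]; exact mul_nonneg hWpos.le (by linarith)
    rw [if_pos hQ]
    split_ifs with h
    · exact le_refl _
    · exact hS0
  · have hS0 : ∑ j ∈ B, w j * (p j * b j - 1) ≤ 0 := by
      rw [hS]
      exact mul_nonpos_of_nonneg_of_nonpos hWpos.le (by linarith [not_le.mp hQ])
    rw [if_neg hQ]
    split_ifs with h
    · exact hS0
    · exact le_refl _
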